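/- Let F_q ⊆ F_{q^a} be an extension of finite fields of odd characteristic and u ∈ F_{q^a}^*. Then the discriminant of the Scharlau trace form Tr_{F_{q^a}/F_q}(⟨u⟩) is a square in F_q if and only if (a is odd and u is a square in F_{q^a}) or (a is even and u is a nonsquare in F_{q^a}). -/

import Mathlib

open Matrix Polynomial FiniteField Module

lemma aux_exists_gen (F K : Type) [Field F] [Field K] [Fintype F] [Fintype K] [Algebra F K]
    [FiniteDimensional F K] :
    ∃ φ : K ≃ₐ[F] K, orderOf φ = finrank F K ∧
      (∀ x : K, φ x = x ^ Fintype.card F) ∧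
      ∀ σ : K ≃ₐ[F] K, ∃ m : ℕ, φ ^ m = σ := by
  classical
  set q := Fintype.card F with hq
  have hq1 : 1 < q := Fintype.one_lt_card
  set a := finrank F K with ha
  have ha0 : 0 < a := finrank_pos
  have hcard : Fintype.card K = q ^ a := card_eq_pow_finrank
  obtain ⟨p, hp⟩ := CharP.exists F
  haveI := hp
  haveI : CharP K p := charP_of_injective_algebraMap (algebraMap F K).injective p
  obtain ⟨n, hprime, hFcard⟩ := FiniteField.card F p
  haveI : Fact p.Prime := ⟨hprime⟩
  have hfrob : ∀ x : K, ((frobenius K p ^ (n : ℕ)) x) = x ^ q := by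
    intro x
    rw [hq, hFcard, RingHom.coe_pow, iterate_frobenius]
  let φ₀ : K →ₐ[F] K :=
  { toRingHom := (frobenius K p ^ (n : ℕ))
    commutes' := fun c => by
      show (frobenius K p ^ (n : ℕ)) (algebraMap F K c) = algebraMap F K c
      rw [hfrob, ← map_pow, FiniteField.pow_card] }
  have hbij : Function.Bijective φ₀ :=
    Finite.injective_iff_bijective.mp (RingHom.injective (φ₀ : K →+* K))
  let φ : K ≃ₐ[F] K := AlgEquiv.ofBijective φ₀ hbij
  have hφ : ∀ x : K, φ x = x ^ q := fun x => hfrob x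
  have hφpow : ∀ (k : ℕ) (x : K), (φ ^ k) x = x ^ q ^ k := by
    intro k
    induction k with
    | zero => intro x; simp
    | succ k ih =>
        intro x
        rw [pow_succ', AlgEquiv.mul_apply, ih, hφ, ← pow_mul, pow_succ]
  have hφa : φ ^ a = 1 := by
    apply AlgEquiv.ext
    intro x
    rw [hφpow, ← hcard, FiniteField.pow_card, AlgEquiv.one_apply]
  have hφk : ∀ m : ℕ, m < a → 0 < m → φ ^ m ≠ 1 := by
    intro m hma hm0 h
    have hall : ∀ x : K, x ^ q ^ m = x := fun x => by
      rw [← hφpow m x, h, AlgEquiv.one_apply]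
    have hqm : 1 < q ^ m := Nat.one_lt_pow hm0.ne' hq1
    set P : K[X] := X ^ q ^ m - X with hP
    have hdeg : P.natDegree = q ^ m := by
      rw [hP, Polynomial.natDegree_sub_eq_left_of_natDegree_lt, natDegree_X_pow]
      rw [natDegree_X, natDegree_X_pow]
      exact hqm
    have hP0 : P ≠ 0 := fun h0 => by
      rw [h0, natDegree_zero] at hdeg
      omega
    have : P = 0 := by
      apply Polynomial.eq_zero_of_forall_eval_zero_of_natDegree_lt_card P
        (fun r => by simp [hP, sub_eq_zero, hall r])
      rw [hdeg, Cardinal.mk_fintype, hcard]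
      exact_mod_cast Nat.pow_lt_pow_right hq1 hma
    exact hP0 this
  have horder : orderOf φ = a := by
    rw [orderOf_eq_iff ha0]
    exact ⟨hφa, fun m hma hm0 => hφk m hma hm0⟩
  have hcardGal : Nat.card (K ≃ₐ[F] K) = a := by
    have := IsGalois.card_aut_eq_finrank F K
    exact this
  have htop : Subgroup.zpowers φ = ⊤ := by
    apply Subgroup.eq_top_of_card_eq
    rw [Nat.card_zpowers, horder, hcardGal]
  refine ⟨φ, horder, hφ, fun σ => ?_⟩
  have hmem : σ ∈ Submonoid.powers φ := by
    rw [mem_powers_iff_mem_zpowers, htop]; trivial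
  obtain ⟨m, hm⟩ := hmem
  exact ⟨m, hm⟩

lemma aux_mul_isSquare {F : Type} [Field F] [Fintype F] (hodd : ringChar F ≠ 2)
    {x y : F} (hx : x ≠ 0) (hy : y ≠ 0) :
    IsSquare (x * y) ↔ (IsSquare x ↔ IsSquare y) := by
  have hne : (-1 : F) ≠ 1 := Ring.neg_one_ne_one_of_char_ne_two hodd
  rw [FiniteField.isSquare_iff hodd (mul_ne_zero hx hy), FiniteField.isSquare_iff hodd hx,
    FiniteField.isSquare_iff hodd hy, mul_pow]
  rcases FiniteField.pow_dichotomy hodd hx with h1 | h1 <;>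
    rcases FiniteField.pow_dichotomy hodd hy with h2 | h2 <;>
      rw [h1, h2] <;> simp [hne, hne.symm]


/-- Let `F ⊆ K` be an extension of finite fields of odd characteristic, of degree
`a = [K : F]`, and `u ∈ Kˣ`.  The discriminant of the Scharlau trace form
`Tr_{K/F}(⟨u⟩)`, i.e. the determinant of the Gram matrix
`(Tr_{K/F}(u · bᵢ · bⱼ))` in any `F`-basis `b` of `K`, is a square in `F`
iff (`a` is odd and `u` is a square in `K`) or (`a` is even and `u` is a
nonsquare in `K`). -/
theorem stmt4 (F K : Type) [Field F] [Field K] [Fintype F] [Fintype K] [Algebra F K]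
    (hodd : ringChar F ≠ 2) (u : Kˣ)
    (ι : Type) [Fintype ι] [DecidableEq ι] (b : Basis ι F K) :
    IsSquare (Matrix.det (Matrix.of fun i j : ι =>
        Algebra.trace F K ((u : K) * b i * b j))) ↔
      ((Odd (Module.finrank F K) ∧ IsSquare (u : K)) ∨
        (Even (Module.finrank F K) ∧ ¬ IsSquare (u : K))) := by
  classical
  haveI : FiniteDimensional F K := Module.Finite.of_basis b
  have hoddK : ringChar K ≠ 2 := by
    haveI : CharP K (ringChar F) :=
      charP_of_injective_algebraMap (algebraMap F K).injective _
    have : ringChar K = ringChar F := ringChar.eq K (ringChar F)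
    rw [this]; exact hodd
  set q := Fintype.card F with hqdef
  set Q := Fintype.card K with hQdef
  set a := finrank F K with hadef
  have hq1 : 1 < q := Fintype.one_lt_card
  have ha0 : 0 < a := finrank_pos
  have hQ : Q = q ^ a := card_eq_pow_finrank
  have hqodd : q % 2 = 1 := FiniteField.odd_card_of_char_ne_two hodd
  have hQodd : Q % 2 = 1 := FiniteField.odd_card_of_char_ne_two hoddK
  have hneF : (-1 : F) ≠ 1 := Ring.neg_one_ne_one_of_char_ne_two hodd
  -- the geometric sum
  set s := ∑ k ∈ Finset.range a, q ^ k with hsdef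
  have hgeom : (q - 1) * s = q ^ a - 1 := by
    have hz : ((q : ℤ) - 1) * (s : ℤ) = (q : ℤ) ^ a - 1 := by
      rw [hsdef, mul_comm]
      push_cast
      exact geom_sum_mul (q : ℤ) a
    have h1q : 1 ≤ q := hq1.le
    have h1qa : 1 ≤ q ^ a := Nat.one_le_pow _ _ (by omega)
    have : (((q - 1) * s : ℕ) : ℤ) = (((q ^ a - 1 : ℕ)) : ℤ) := by
      push_cast [Nat.cast_sub h1q, Nat.cast_sub h1qa]
      exact hz
    exact_mod_cast this
  have hsmod : s % 2 = a % 2 := by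
    rw [hsdef, Finset.sum_nat_mod]
    have hcongr : ∀ k ∈ Finset.range a, q ^ k % 2 = 1 :=
      fun k _ => by simp [Nat.pow_mod, hqodd]
    rw [Finset.sum_congr rfl hcongr, Finset.sum_const, Finset.card_range, smul_eq_mul, mul_one]
  have hQ2 : Q / 2 = q / 2 * s := by
    have h2 : 2 * (Q / 2) = 2 * (q / 2 * s) := by
      rw [Nat.two_mul_odd_div_two hQodd, ← mul_assoc, Nat.two_mul_odd_div_two hqodd, hgeom, hQ]
    omega
  -- the Galois group generator
  obtain ⟨φ, horder, hφcard, hφgen⟩ := aux_exists_gen F K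
  have hφpow : ∀ (k : ℕ) (x : K), (φ ^ k) x = x ^ q ^ k := by
    intro k
    induction k with
    | zero => intro x; simp
    | succ k ih =>
        intro x
        rw [pow_succ', AlgEquiv.mul_apply, ih, hφcard, ← pow_mul, pow_succ]
  have hcardGal : Nat.card (K ≃ₐ[F] K) = a := by
    have := IsGalois.card_aut_eq_finrank F K
    exact this
  have hfcGal : Fintype.card (K ≃ₐ[F] K) = a := by
    rw [← Nat.card_eq_fintype_card]; exact hcardGal
  -- norm as a power
  have hnorm : ∀ x : K, algebraMap F K (Algebra.norm F x) = x ^ s := by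
    intro x
    rw [Algebra.norm_eq_prod_automorphisms]
    have hgbij : Function.Bijective (fun k : Fin a => φ ^ (k : ℕ)) := by
      rw [Fintype.bijective_iff_surjective_and_card]
      constructor
      · intro σ
        obtain ⟨m, hm⟩ := hφgen σ
        refine ⟨⟨m % a, Nat.mod_lt _ ha0⟩, ?_⟩
        show φ ^ (m % a) = σ
        conv_lhs => rw [show a = orderOf φ from horder.symm]
        rw [pow_mod_orderOf, hm]
      · rw [Fintype.card_fin, hfcGal]
    calc (∏ σ : K ≃ₐ[F] K, σ x)
        = ∏ k : Fin a, (φ ^ (k : ℕ)) x :=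
          (Fintype.prod_bijective _ hgbij _ _ (fun k => rfl)).symm
      _ = ∏ k : Fin a, x ^ q ^ (k : ℕ) := by simp_rw [hφpow]
      _ = x ^ s := by
          rw [Fin.prod_univ_eq_prod_range (fun k => x ^ q ^ k) a,
            Finset.prod_pow_eq_pow_sum]
  have hNu : Algebra.norm F (u : K) ≠ 0 :=
    Algebra.norm_ne_zero_iff.mpr (Units.ne_zero u)
  have hnormsq : IsSquare (Algebra.norm F (u : K)) ↔ IsSquare (u : K) := by
    rw [FiniteField.isSquare_iff hodd hNu, FiniteField.isSquare_iff hoddK (Units.ne_zero u)]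
    rw [← (algebraMap F K).injective.eq_iff, map_pow, _root_.map_one, hnorm, ← pow_mul, mul_comm s,
      ← hQ2]
  -- the embeddings matrix
  have hι : Fintype.card ι = a := (finrank_eq_card_basis b).symm
  have e : ι ≃ (K ≃ₐ[F] K) := Fintype.equivOfCardEq (by rw [hι, hfcGal])
  set W : Matrix ι ι K := Matrix.of (fun i j => e i (b j)) with hWdef
  have hWtW : (Algebra.traceMatrix F b).map (algebraMap F K) = Wᵀ * W := by
    ext i j
    rw [Matrix.map_apply, Matrix.mul_apply, Algebra.traceMatrix_apply, Algebra.traceForm_apply,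
      trace_eq_sum_automorphisms]
    rw [← Equiv.sum_comp e (fun σ : K ≃ₐ[F] K => σ (b i * b j))]
    refine Finset.sum_congr rfl fun k _ => ?_
    simp [hWdef, _root_.map_mul]
  have hdetW : algebraMap F K (Algebra.traceMatrix F b).det = W.det ^ 2 := by
    rw [RingHom.map_det, RingHom.mapMatrix_apply, hWtW, Matrix.det_mul, Matrix.det_transpose, sq]
  have hdetG0 : (Algebra.traceMatrix F b).det ≠ 0 := by
    have h := Algebra.discr_not_zero_of_basis F b
    rwa [Algebra.discr_def] at h
  have hdetW0 : W.det ≠ 0 := by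
    intro h0
    apply hdetG0
    have h1 : algebraMap F K (Algebra.traceMatrix F b).det = 0 := by
      rw [hdetW, h0]; ring
    exact (_root_.map_eq_zero _).mp h1
  -- Galois action on W.det
  have hπ : W.map φ = W.submatrix (Equiv.permCongr e.symm (Equiv.mulLeft φ)) id := by
    ext i j
    simp only [Matrix.map_apply, Matrix.submatrix_apply, Matrix.of_apply, hWdef, id_eq,
      Equiv.permCongr_apply, Equiv.symm_symm, Equiv.apply_symm_apply, Equiv.coe_mulLeft]
    exact (AlgEquiv.mul_apply φ (e i) (b j)).symm
  have hφdet : φ W.det = ((Equiv.Perm.sign (Equiv.mulLeft φ) : ℤ) : K) * W.det := by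
    have h1 := RingHom.map_det ((φ : K ≃+* K) : K →+* K) W
    rw [RingHom.mapMatrix_apply] at h1
    have h2 : ((φ : K ≃+* K) : K →+* K) W.det = φ W.det := rfl
    have h3 : W.map (((φ : K ≃+* K) : K →+* K) : K → K) = W.map φ := rfl
    rw [h2, h3, hπ, Matrix.det_permute, Equiv.Perm.sign_permCongr] at h1
    exact_mod_cast h1
  have hsign : Even a → Equiv.Perm.sign (Equiv.mulLeft φ) = -1 := by
    intro hea
    have hφ1 : φ ≠ 1 := by
      intro h
      rw [h, orderOf_one] at horder
      have ha1 : a = 1 := hadef.trans horder.symm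
      rw [ha1] at hea
      exact (Nat.not_odd_iff_even.mpr hea) odd_one
    have hmove : ∀ y : K ≃ₐ[F] K, Equiv.mulLeft φ y ≠ y := by
      intro y h
      have h' : φ * y = y := h
      exact hφ1 (mul_eq_right.mp h')
    have hcyc : (Equiv.mulLeft φ).IsCycle := by
      refine ⟨1, hmove 1, fun y _ => ?_⟩
      obtain ⟨m, hm⟩ := hφgen y
      refine ⟨(m : ℤ), ?_⟩
      rw [zpow_natCast, Equiv.pow_mulLeft]
      show φ ^ m * 1 = y
      rw [mul_one, hm]
    have hs := hcyc.sign
    rw [show (Equiv.mulLeft φ).support = Finset.univ from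
      Finset.eq_univ_iff_forall.mpr fun y => Equiv.Perm.mem_support.mpr (hmove y),
      Finset.card_univ, hfcGal] at hs
    rw [hs, hea.neg_one_pow]
  -- squareness of the discriminant
  have hGodd : IsSquare (Algebra.traceMatrix F b).det ↔ Odd a := by
    constructor
    · intro hsq
      by_contra hna
      have hea : Even a := Nat.not_odd_iff_even.mp hna
      obtain ⟨c, hc⟩ := hsq
      have hφW : φ W.det = - W.det := by
        rw [hφdet, hsign hea]
        push_cast
        ring
      have hfix : φ W.det = W.det := by
        have h1 : (algebraMap F K c) ^ 2 = W.det ^ 2 := by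
          rw [← hdetW, hc, _root_.map_mul, sq]
        have h2 : (W.det - algebraMap F K c) * (W.det + algebraMap F K c) = 0 := by
          linear_combination - h1
        rcases mul_eq_zero.mp h2 with h | h
        · rw [sub_eq_zero.mp h, AlgEquiv.commutes]
        · rw [eq_neg_of_add_eq_zero_left h, map_neg, AlgEquiv.commutes]
      rw [hfix] at hφW
      apply hdetW0
      have h2K : (2 : K) ≠ 0 := Ring.two_ne_zero hoddK
      have h3 : (2 : K) * W.det = 0 := by linear_combination hφW
      exact (mul_eq_zero.mp h3).resolve_left h2K
    · intro hoa
      rw [FiniteField.isSquare_iff hodd hdetG0]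
      have hs_odd : Odd s := by
        rw [Nat.odd_iff, hsmod, ← Nat.odd_iff]
        exact hoa
      rcases FiniteField.pow_dichotomy hodd hdetG0 with h | h
      · exact h
      · exfalso
        have hDQ : algebraMap F K ((Algebra.traceMatrix F b).det ^ (Q / 2)) = 1 := by
          rw [map_pow, hdetW, ← pow_mul]
          rw [show 2 * (Q / 2) = Q - 1 from Nat.two_mul_odd_div_two hQodd]
          exact FiniteField.pow_card_sub_one_eq_one _ hdetW0
        have hDQ' : (Algebra.traceMatrix F b).det ^ (Q / 2) = 1 :=
          (algebraMap F K).injective (by rw [hDQ, _root_.map_one])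
        rw [hQ2, pow_mul, h, hs_odd.neg_one_pow] at hDQ'
        exact hneF hDQ'
  -- the Gram matrix of the u-scaled form
  have hM : (Matrix.of fun i j : ι => Algebra.trace F K ((u : K) * b i * b j)) =
      (Algebra.leftMulMatrix b (u : K))ᵀ * Algebra.traceMatrix F b := by
    ext i j
    rw [Matrix.mul_apply]
    simp only [Matrix.of_apply, Matrix.transpose_apply, Algebra.traceMatrix_apply,
      Algebra.traceForm_apply]
    have hrep : (u : K) * b i = ∑ k, Algebra.leftMulMatrix b (u : K) k i • b k := by
      simp_rw [Algebra.leftMulMatrix_eq_repr_mul]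
      exact (b.sum_repr _).symm
    rw [hrep, Finset.sum_mul, map_sum]
    exact Finset.sum_congr rfl fun k _ => by rw [smul_mul_assoc, _root_.map_smul, smul_eq_mul]
  rw [hM, Matrix.det_mul, Matrix.det_transpose, ← Algebra.norm_eq_matrix_det b,
    aux_mul_isSquare hodd hNu hdetG0, hnormsq, hGodd]
  rcases Nat.even_or_odd a with he | ho
  · have := Nat.not_odd_iff_even.mpr he
    constructor
    · intro hiff
      exact Or.inr ⟨he, fun hsq => this (hiff.mp hsq)⟩
    · rintro (⟨h1, _⟩ | ⟨_, h2⟩)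
      · exact absurd h1 this
      · exact ⟨fun hsq => absurd hsq h2, fun hoa => absurd hoa this⟩
  · have := Nat.not_even_iff_odd.mpr ho
    constructor
    · intro hiff
      exact Or.inl ⟨ho, hiff.mpr ho⟩
    · rintro (⟨_, h1⟩ | ⟨h2, _⟩)
      · exact ⟨fun _ => ho, fun _ => h1⟩
      · exact absurd h2 this
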